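/- For any lattice L, there is a complete embedding of L into a complete Boolean algebra (an embedding preserving all existing joins and meets) if and only if L satisfies the join-infinite distributive law (JID) and the meet-infinite distributive law (MID). -/

import Mathlib

universe u v

open Set TopologicalSpace

namespace FunayamaAux

/-! ### A complete Boolean algebra structure on Heyting-regular elements of a frame -/

section RegCBA

variable {α : Type v} [Order.Frame α]

open Heyting

lemma isRegular_sInf {S : Set α} (h : ∀ x ∈ S, IsRegular x) : IsRegular (sInf S) := by
  refine le_antisymm (le_sInf fun x hx => ?_) le_compl_compl
  calc (sInf S)ᶜᶜ ≤ xᶜᶜ := compl_anti (compl_anti (sInf_le hx))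
    _ = x := (h x hx).eq

/-- The complete lattice structure on regular elements of a frame. -/
def regCompleteLattice : CompleteLattice (Regular α) :=
  { (inferInstance : Lattice (Regular α)), (inferInstance : BoundedOrder (Regular α)) with
    sSup := fun S => Regular.toRegular (sSup ((↑) '' S))
    isLUB_sSup := fun S => ⟨fun x hx => by
      refine Regular.coe_le_coe.1 ?_
      exact le_trans (le_sSup (mem_image_of_mem _ hx)) le_compl_compl,
    fun x h => by
      refine Regular.coe_le_coe.1 ?_
      refine le_of_le_of_eq ?_ x.2.eq
      refine compl_anti (compl_anti ?_)
      refine sSup_le ?_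
      rintro _ ⟨y, hy, rfl⟩
      exact Regular.coe_le_coe.2 (h hy)⟩
    sInf := fun S => ⟨sInf ((↑) '' S), isRegular_sInf (by rintro _ ⟨y, hy, rfl⟩; exact y.2)⟩
    isGLB_sInf := fun S => ⟨fun x hx => by
      refine Regular.coe_le_coe.1 ?_
      exact sInf_le (mem_image_of_mem _ hx),
    fun x h => by
      refine Regular.coe_le_coe.1 ?_
      refine le_sInf ?_
      rintro _ ⟨y, hy, rfl⟩
      exact Regular.coe_le_coe.2 (h hy)⟩ }

/- dead code below, kept commented
      Regular.coe_le_coe.1 (by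
        have h1 : sSup (((↑) : Regular α → α) '' S) ≤ (x : α) := by
          refine sSup_le ?_
          rintro _ ⟨y, hy, rfl⟩
          exact Regular.coe_le_coe.2 (h y hy)
        calc ((Regular.toRegular (sSup (((↑) : Regular α → α) '' S)) : Regular α) : α)
            = (sSup (((↑) : Regular α → α) '' S))ᶜᶜ := rfl
          _ ≤ ((x : α))ᶜᶜ := compl_anti (compl_anti h1)
          _ = (x : α) := x.2.eq)
    sInf := fun S => ⟨sInf ((↑) '' S), isRegular_sInf (by rintro _ ⟨y, hy, rfl⟩; exact y.2)⟩
    sInf_le := fun S x hx => Regular.coe_le_coe.1 (sInf_le (mem_image_of_mem _ hx))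
    le_sInf := fun S x h =>
      Regular.coe_le_coe.1 (le_sInf (by rintro _ ⟨y, hy, rfl⟩; exact Regular.coe_le_coe.2 (h y hy)))
-/

/-- The regular elements of a frame form a complete Boolean algebra. -/
def regCBA : CompleteBooleanAlgebra (Regular α) := by
  letI : CompleteLattice (Regular α) := regCompleteLattice
  refine { (inferInstance : CompleteLattice (Regular α)),
           (inferInstance : BooleanAlgebra (Regular α)) with }

end RegCBA

end FunayamaAux

namespace FunayamaAux

section Spec

variable {L : Type u} [DistribLattice L]

/-- Proper prime filters. -/
def Good (F : Set L) : Prop :=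
  F.Nonempty ∧ F ≠ Set.univ ∧ (∀ ⦃x y : L⦄, x ∈ F → x ≤ y → y ∈ F) ∧
    (∀ ⦃x y : L⦄, x ∈ F → y ∈ F → x ⊓ y ∈ F) ∧ (∀ ⦃x y : L⦄, x ⊔ y ∈ F → x ∈ F ∨ y ∈ F)

lemma Good.up {F : Set L} (hF : Good F) {x y : L} (hx : x ∈ F) (h : x ≤ y) : y ∈ F :=
  hF.2.2.1 hx h

lemma Good.meet {F : Set L} (hF : Good F) {x y : L} (hx : x ∈ F) (hy : y ∈ F) : x ⊓ y ∈ F :=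
  hF.2.2.2.1 hx hy

lemma Good.prime {F : Set L} (hF : Good F) {x y : L} (hxy : x ⊔ y ∈ F) : x ∈ F ∨ y ∈ F :=
  hF.2.2.2.2 hxy

/-- The space of proper prime filters. -/
def Spec (L : Type u) [DistribLattice L] : Type u := {F : Set L // Good F}

/-- Basic "open" sets. -/
def U (a : L) : Set (Spec L) := {F | a ∈ F.1}

/-- Prime filter separation. -/
lemma sep {a b : L} (h : ¬ a ≤ b) : ∃ F : Spec L, a ∈ F.1 ∧ b ∉ F.1 := by
  classical
  set i : L → WithBot (WithTop L) := fun x => ((x : WithTop L) : WithBot (WithTop L)) with hi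
  have hmono : ∀ {x y : L}, i x ≤ i y ↔ x ≤ y := by
    intro x y; simp [hi, WithBot.coe_inf, WithTop.coe_inf]
  have hinf : ∀ x y : L, i (x ⊓ y) = i x ⊓ i y := by
    intro x y; simp [hi, WithBot.coe_inf, WithTop.coe_inf]
  have hsup : ∀ x y : L, i (x ⊔ y) = i x ⊔ i y := by
    intro x y; simp [hi, WithBot.coe_sup, WithTop.coe_sup]
  have hdisj : Disjoint ((Order.PFilter.principal (i a) : Order.PFilter (WithBot (WithTop L))) :
      Set (WithBot (WithTop L)))
      ((Order.Ideal.principal (i b) : Order.Ideal (WithBot (WithTop L))) : Set (WithBot (WithTop L))) := by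
    rw [Set.disjoint_left]
    intro x hx hx'
    have h1 : i a ≤ x := hx
    have h2 : x ≤ i b := hx'
    exact h (hmono.1 (le_trans h1 h2))
  obtain ⟨J, hJp, hIJ, hFJ⟩ := DistribLattice.prime_ideal_of_disjoint_filter_ideal hdisj
  have haJ : i a ∉ J := by
    intro hmem
    exact Set.disjoint_left.1 hFJ (Order.PFilter.mem_principal.2 le_rfl) hmem
  have hbJ : i b ∈ J := hIJ (Order.Ideal.mem_principal.2 le_rfl)
  refine ⟨⟨{x : L | i x ∉ J}, ⟨a, haJ⟩, ?_, ?_, ?_, ?_⟩, haJ, by simpa using hbJ⟩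
  · intro hall
    have : b ∈ {x : L | i x ∉ J} := hall ▸ Set.mem_univ b
    exact this hbJ
  · intro x y hx hxy hyJ
    exact hx (J.lower (hmono.2 hxy) hyJ)
  · intro x y hx hy hmem
    rw [hinf] at hmem
    rcases hJp.mem_or_mem hmem with h' | h'
    exacts [hx h', hy h']
  · intro x y hxy
    by_contra hc
    push_neg at hc
    obtain ⟨hx, hy⟩ := hc
    simp only [Set.mem_setOf_eq, not_not] at hx hy
    have hmem : i (x ⊔ y) ∈ J := by rw [hsup]; exact J.sup_mem hx hy
    exact hxy hmem

lemma Umono {a b : L} (h : a ≤ b) : U a ⊆ U b := fun F hF => F.2.up hF h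

lemma Ule {a b : L} (h : U a ⊆ U b) : a ≤ b := by
  by_contra hc
  obtain ⟨F, ha, hb⟩ := sep hc
  exact hb (h ha)

lemma U_inter (a b : L) : U (a ⊓ b) = U a ∩ U b := by
  ext F
  constructor
  · intro h
    exact ⟨F.2.up h inf_le_left, F.2.up h inf_le_right⟩
  · rintro ⟨h1, h2⟩
    exact F.2.meet h1 h2

lemma U_union (a b : L) : U (a ⊔ b) = U a ∪ U b := by
  ext F
  constructor
  · intro h
    exact F.2.prime h
  · rintro (h | h)
    exacts [F.2.up h le_sup_left, F.2.up h le_sup_right]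

lemma U_empty_of_bot {a : L} (h : ∀ y, a ≤ y) : U a = ∅ := by
  rw [Set.eq_empty_iff_forall_notMem]
  intro F hF
  refine F.2.2.1 ?_
  rw [Set.eq_univ_iff_forall]
  exact fun y => F.2.up hF (h y)

lemma bot_of_U_empty {a : L} (h : U a = ∅) : ∀ y, a ≤ y := by
  intro y
  by_contra hc
  obtain ⟨F, ha, _⟩ := sep hc
  exact (h ▸ ha : (F : Spec L) ∈ (∅ : Set (Spec L)))

lemma U_univ_of_top {a : L} (h : ∀ y, y ≤ a) : U a = Set.univ := by
  rw [Set.eq_univ_iff_forall]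
  intro F
  obtain ⟨x, hx⟩ := F.2.1
  exact F.2.up hx (h x)

lemma top_of_U_univ {a : L} (h : U a = Set.univ) : ∀ y, y ≤ a := by
  intro y
  by_contra hc
  obtain ⟨F, _, hb⟩ := sep hc
  exact hb (Set.eq_univ_iff_forall.1 h F)

end Spec

end FunayamaAux
namespace FunayamaAux

section Topo

variable {L : Type u} [DistribLattice L]

/-- The subbasis of the spectral-like topology. -/
def SubB (L : Type u) [DistribLattice L] : Set (Set (Spec L)) :=
  {s | ∃ a : L, s = U a ∨ s = (U a)ᶜ}

instance : TopologicalSpace (Spec L) := TopologicalSpace.generateFrom (SubB L)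

lemma isOpen_U (a : L) : IsOpen (U a) :=
  TopologicalSpace.isOpen_generateFrom_of_mem ⟨a, Or.inl rfl⟩

lemma isOpen_Uc (a : L) : IsOpen (U a)ᶜ :=
  TopologicalSpace.isOpen_generateFrom_of_mem ⟨a, Or.inr rfl⟩

/-- Positive part of a basic open. -/
def Pt : Option L → Set (Spec L)
  | none => Set.univ
  | some a => U a

/-- Negative part of a basic open. -/
def Nt : Option L → Set (Spec L)
  | none => Set.univ
  | some b => (U b)ᶜ

def pmerge : Option L → L → Option L
  | none, a => some a
  | some a', a => some (a ⊓ a')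

def nmerge : Option L → L → Option L
  | none, b => some b
  | some b', b => some (b ⊔ b')

lemma Pt_pmerge (p : Option L) (a : L) : Pt (pmerge p a) = U a ∩ Pt p := by
  cases p with
  | none => simp [Pt, pmerge]
  | some a' => simp [Pt, pmerge, U_inter]

lemma Nt_nmerge (q : Option L) (b : L) : Nt (nmerge q b) = (U b)ᶜ ∩ Nt q := by
  cases q with
  | none => simp [Nt, nmerge]
  | some b' => simp [Nt, nmerge, U_union, Set.compl_union]

lemma normal_form {f : Set (Set (Spec L))} (hf : f.Finite) (hsub : f ⊆ SubB L) :
    ∃ p q : Option L, ⋂₀ f = Pt p ∩ Nt q := by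
  revert hsub
  refine Set.Finite.induction_on (motive := fun f _ => f ⊆ SubB L → ∃ p q : Option L, ⋂₀ f = Pt p ∩ Nt q)
    f hf (fun _ => ⟨none, none, by simp [Pt, Nt]⟩) ?_
  intro s f _ _ ih hsub
  obtain ⟨p, q, hpq⟩ := ih (fun x hx => hsub (Set.mem_insert_of_mem _ hx))
  obtain ⟨a, rfl | rfl⟩ := hsub (Set.mem_insert _ _)
  · exact ⟨pmerge p a, q, by
      rw [Set.sInter_insert, hpq, Pt_pmerge, Set.inter_assoc]⟩
  · exact ⟨p, nmerge q a, by
      rw [Set.sInter_insert, hpq, Nt_nmerge]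
      rw [Set.inter_left_comm]⟩

end Topo

end FunayamaAux
namespace FunayamaAux

section Key

variable {L : Type u} [DistribLattice L]

lemma basic_JID
    (hJID : ∀ (S : Set L) (m a : L), IsLUB S m → IsLUB ((fun s => a ⊓ s) '' S) (a ⊓ m))
    {S : Set L} {m : L} (hm : IsLUB S m) (p q : Option L)
    (hd : ∀ s ∈ S, Pt p ∩ Nt q ∩ U s = ∅) :
    Pt p ∩ Nt q ∩ U m = ∅ := by
  match p, q with
  | some a, some b =>
    have hab : ∀ s ∈ S, a ⊓ s ≤ b := by
      intro s hs
      refine Ule ?_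
      intro F hF
      rw [U_inter] at hF
      by_contra hFb
      have hmem : F ∈ Pt (some a) ∩ Nt (some b) ∩ U s := ⟨⟨hF.1, hFb⟩, hF.2⟩
      rw [hd s hs] at hmem
      exact hmem
    have h2 : a ⊓ m ≤ b := by
      refine (hJID S m a hm).2 ?_
      rintro _ ⟨s, hs, rfl⟩
      exact hab s hs
    rw [Set.eq_empty_iff_forall_notMem]
    rintro F ⟨⟨hFa, hFb⟩, hFm⟩
    refine hFb (Umono h2 ?_)
    rw [U_inter]
    exact ⟨hFa, hFm⟩
  | some a, none =>
    have hab : ∀ s ∈ S, ∀ y, a ⊓ s ≤ y := by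
      intro s hs
      refine bot_of_U_empty ?_
      rw [U_inter]
      have h3 := hd s hs
      simpa [Pt, Nt] using h3
    have h2 : ∀ y, a ⊓ m ≤ y := by
      intro y
      refine (hJID S m a hm).2 ?_
      rintro _ ⟨s, hs, rfl⟩
      exact hab s hs y
    have h4 : U (a ⊓ m) = ∅ := U_empty_of_bot h2
    rw [U_inter] at h4
    simp only [Pt, Nt, Set.inter_univ]
    exact h4
  | none, some b =>
    have hab : ∀ s ∈ S, s ≤ b := by
      intro s hs
      refine Ule ?_
      intro F hF
      by_contra hFb
      have hmem : F ∈ Pt (none : Option L) ∩ Nt (some b) ∩ U s := ⟨⟨Set.mem_univ F, hFb⟩, hF⟩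
      rw [hd s hs] at hmem
      exact hmem
    have h2 : m ≤ b := hm.2 hab
    rw [Set.eq_empty_iff_forall_notMem]
    rintro F ⟨⟨_, hFb⟩, hFm⟩
    exact hFb (Umono h2 hFm)
  | none, none =>
    have hab : ∀ s ∈ S, ∀ y, s ≤ y := by
      intro s hs
      refine bot_of_U_empty ?_
      have h3 := hd s hs
      simpa [Pt, Nt] using h3
    have h2 : ∀ y, m ≤ y := fun y => hm.2 (fun s hs => hab s hs y)
    simp only [Pt, Nt, Set.univ_inter]
    exact U_empty_of_bot h2

lemma basic_MID
    (hMID : ∀ (S : Set L) (m a : L), IsGLB S m → IsGLB ((fun s => a ⊔ s) '' S) (a ⊔ m))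
    {S : Set L} {m : L} (hm : IsGLB S m) (p q : Option L)
    (hd : ∀ s ∈ S, Pt p ∩ Nt q ⊆ U s) :
    Pt p ∩ Nt q ⊆ U m := by
  match p, q with
  | some a, some b =>
    have hab : ∀ s ∈ S, a ≤ b ⊔ s := by
      intro s hs
      refine Ule ?_
      intro F hF
      rw [U_union]
      by_contra hc
      rw [Set.mem_union, not_or] at hc
      obtain ⟨hFb, hFs⟩ := hc
      exact hFs (hd s hs ⟨hF, hFb⟩)
    have h2 : a ≤ b ⊔ m := by
      refine (hMID S m b hm).2 ?_
      rintro _ ⟨s, hs, rfl⟩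
      exact hab s hs
    rintro F ⟨hFa, hFb⟩
    have := Umono h2 hFa
    rw [U_union] at this
    rcases this with h | h
    · exact absurd h hFb
    · exact h
  | some a, none =>
    have hab : ∀ s ∈ S, a ≤ s := by
      intro s hs
      refine Ule fun F hF => hd s hs ⟨hF, Set.mem_univ F⟩
    have h2 : a ≤ m := hm.2 hab
    rintro F ⟨hFa, _⟩
    exact Umono h2 hFa
  | none, some b =>
    have hab : ∀ y, y ≤ b ⊔ m := by
      intro y
      refine (hMID S m b hm).2 ?_
      rintro _ ⟨s, hs, rfl⟩
      have huniv : U (b ⊔ s) = Set.univ := by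
        rw [U_union, Set.eq_univ_iff_forall]
        intro F
        by_cases hFb : F ∈ U b
        · exact Or.inl hFb
        · exact Or.inr (hd s hs ⟨Set.mem_univ F, hFb⟩)
      exact top_of_U_univ huniv y
    have huniv2 : U (b ⊔ m) = Set.univ := U_univ_of_top hab
    rintro F ⟨_, hFb⟩
    have := Set.eq_univ_iff_forall.1 huniv2 F
    rw [U_union] at this
    rcases this with h | h
    · exact absurd h hFb
    · exact h
  | none, none =>
    have hab : ∀ y, y ≤ m := by
      intro y
      refine hm.2 ?_
      intro s hs
      exact top_of_U_univ (Set.eq_univ_of_univ_subset (by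
        intro F hF
        exact hd s hs ⟨hF, hF⟩)) y
    intro F _
    exact Set.eq_univ_iff_forall.1 (U_univ_of_top hab) F

lemma open_JID
    (hJID : ∀ (S : Set L) (m a : L), IsLUB S m → IsLUB ((fun s => a ⊓ s) '' S) (a ⊓ m))
    {S : Set L} {m : L} (hm : IsLUB S m) {W : Set (Spec L)} (hW : IsOpen W)
    (hd : ∀ s ∈ S, W ∩ U s = ∅) : W ∩ U m = ∅ := by
  have hbasis := TopologicalSpace.isTopologicalBasis_of_subbasis
    (s := SubB L) (t := (inferInstance : TopologicalSpace (Spec L))) rfl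
  rw [Set.eq_empty_iff_forall_notMem]
  rintro F ⟨hFW, hFm⟩
  obtain ⟨v, ⟨f, ⟨hfin, hfsub⟩, rfl⟩, hFv, hvW⟩ := hbasis.exists_subset_of_mem_open hFW hW
  replace hvW : ⋂₀ f ⊆ W := hvW
  replace hFv : F ∈ ⋂₀ f := hFv
  obtain ⟨p, q, hpq⟩ := normal_form hfin hfsub
  have hkey : Pt p ∩ Nt q ∩ U m = ∅ := by
    refine basic_JID hJID hm p q ?_
    intro s hs
    refine Set.subset_empty_iff.1 ?_
    rw [← hd s hs]
    exact Set.inter_subset_inter_left _ (hpq ▸ hvW)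
  have hFmem : F ∈ Pt p ∩ Nt q ∩ U m := ⟨hpq ▸ hFv, hFm⟩
  rw [hkey] at hFmem
  exact hFmem

lemma open_MID
    (hMID : ∀ (S : Set L) (m a : L), IsGLB S m → IsGLB ((fun s => a ⊔ s) '' S) (a ⊔ m))
    {S : Set L} {m : L} (hm : IsGLB S m) {W : Set (Spec L)} (hW : IsOpen W)
    (hd : ∀ s ∈ S, W ⊆ U s) : W ⊆ U m := by
  have hbasis := TopologicalSpace.isTopologicalBasis_of_subbasis
    (s := SubB L) (t := (inferInstance : TopologicalSpace (Spec L))) rfl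
  intro F hFW
  obtain ⟨v, ⟨f, ⟨hfin, hfsub⟩, rfl⟩, hFv, hvW⟩ := hbasis.exists_subset_of_mem_open hFW hW
  replace hvW : ⋂₀ f ⊆ W := hvW
  replace hFv : F ∈ ⋂₀ f := hFv
  obtain ⟨p, q, hpq⟩ := normal_form hfin hfsub
  have hkey : Pt p ∩ Nt q ⊆ U m := by
    refine basic_MID hMID hm p q ?_
    intro s hs
    exact (hpq ▸ hvW).trans (hd s hs)
  exact hkey (hpq ▸ hFv)

end Key

end FunayamaAux
namespace FunayamaAux

section Main

variable {L : Type u} [DistribLattice L]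

open Heyting

/-- The basic clopen set as an open. -/
def OU (a : L) : Opens (Spec L) := ⟨U a, isOpen_U a⟩

lemma opens_le_iff {V W : Opens (Spec L)} : V ≤ W ↔ (V : Set (Spec L)) ⊆ W := Iff.rfl

lemma opens_compl_eq {V W : Opens (Spec L)} (h : (W : Set (Spec L)) = (↑V)ᶜ) : Vᶜ = W := by
  apply le_antisymm
  · have hset : ((Vᶜ : Opens (Spec L)) : Set (Spec L)) ∩ (V : Set (Spec L)) = ∅ := by
      rw [← Opens.coe_inf, disjoint_iff.1 (disjoint_compl_left (a := V)), Opens.coe_bot]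
    rw [← SetLike.coe_subset_coe, h]
    intro F hF
    intro hFV
    have hmem : F ∈ ((Vᶜ : Opens (Spec L)) : Set (Spec L)) ∩ (V : Set (Spec L)) := ⟨hF, hFV⟩
    rw [hset] at hmem
    exact hmem
  · rw [le_compl_iff_disjoint_right, disjoint_iff, ← Opens.coe_inj, Opens.coe_inf, Opens.coe_bot, h]
    exact Set.compl_inter_self _
  
lemma isReg_OU (a : L) : IsRegular (OU a) := by
  have h1 : (OU a)ᶜ = ⟨(U a)ᶜ, isOpen_Uc a⟩ := opens_compl_eq rfl
  have h2 : (⟨(U a)ᶜ, isOpen_Uc a⟩ : Opens (Spec L))ᶜ = OU a :=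
    opens_compl_eq (compl_compl _).symm
  show (OU a)ᶜᶜ = OU a
  rw [h1, h2]

lemma main
    (hJID : ∀ (S : Set L) (m a : L), IsLUB S m → IsLUB ((fun s => a ⊓ s) '' S) (a ⊓ m))
    (hMID : ∀ (S : Set L) (m a : L), IsGLB S m → IsGLB ((fun s => a ⊔ s) '' S) (a ⊔ m)) :
    ∃ (B : Type u) (inst : CompleteBooleanAlgebra B) (e : L → B),
      Function.Injective e ∧
      (∀ a b : L, e (a ⊓ b) = inst.inf (e a) (e b)) ∧
      (∀ a b : L, e (a ⊔ b) = inst.sup (e a) (e b)) ∧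
      (∀ (S : Set L) (m : L), IsLUB S m → e m = inst.sSup (e '' S)) ∧
      (∀ (S : Set L) (m : L), IsGLB S m → e m = inst.sInf (e '' S)) := by
  classical
  refine ⟨Regular (Opens (Spec L)), regCBA, fun a => ⟨OU a, isReg_OU a⟩, ?_, ?_, ?_, ?_, ?_⟩
  · -- injectivity
    intro a b h
    have hU : U a = U b := congrArg (fun x : Regular (Opens (Spec L)) => (x.1 : Set (Spec L))) h
    exact le_antisymm (Ule hU.le) (Ule hU.ge)
  · -- binary meets
    intro a b
    refine Subtype.ext (Opens.ext ?_)
    show U (a ⊓ b) = ((OU a ⊓ OU b : Opens (Spec L)) : Set (Spec L))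
    rw [Opens.coe_inf]
    exact U_inter a b
  · -- binary joins
    intro a b
    refine Subtype.ext ?_
    show OU (a ⊔ b) = ((OU a ⊔ OU b : Opens (Spec L)))ᶜᶜ
    have hsup : (OU a ⊔ OU b : Opens (Spec L)) = OU (a ⊔ b) := by
      refine Opens.ext ?_
      rw [Opens.coe_sup]
      exact (U_union a b).symm
    rw [hsup]
    exact (isReg_OU (a ⊔ b)).eq.symm
  · -- arbitrary existing joins
    intro S m hm
    refine Subtype.ext ?_
    have him : (Regular.val '' ((fun a => (⟨OU a, isReg_OU a⟩ : Regular (Opens (Spec L)))) '' S))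
        = OU '' S := by
      exact Set.image_image _ _ _
    show OU m = (sSup (Regular.val ''
      ((fun a => (⟨OU a, isReg_OU a⟩ : Regular (Opens (Spec L)))) '' S)))ᶜᶜ
    rw [him]
    set T : Opens (Spec L) := sSup (OU '' S) with hT
    have claim1 : T ≤ OU m := by
      refine sSup_le ?_
      rintro _ ⟨s, hs, rfl⟩
      exact opens_le_iff.2 (Umono (hm.1 hs))
    have claim2 : OU m ≤ Tᶜᶜ := by
      rw [le_compl_iff_disjoint_right, disjoint_iff, ← Opens.coe_inj, Opens.coe_inf, Opens.coe_bot]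
      have hTc : ∀ s ∈ S, ((Tᶜ : Opens (Spec L)) : Set (Spec L)) ∩ U s = ∅ := by
        intro s hs
        have h1 : ((Tᶜ : Opens (Spec L)) : Set (Spec L)) ∩ (T : Set (Spec L)) = ∅ := by
          rw [← Opens.coe_inf, disjoint_iff.1 (disjoint_compl_left (a := T)), Opens.coe_bot]
        refine Set.subset_empty_iff.1 ?_
        rw [← h1]
        refine Set.inter_subset_inter_right _ ?_
        have h2 : OU s ≤ T := le_sSup (Set.mem_image_of_mem OU hs)
        exact opens_le_iff.1 h2
      have hfin := open_JID hJID hm (Tᶜ : Opens (Spec L)).2 hTc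
      rw [Set.inter_comm] at hfin
      exact hfin
    refine le_antisymm claim2 ?_
    calc Tᶜᶜ ≤ (OU m)ᶜᶜ := compl_anti (compl_anti claim1)
      _ = OU m := (isReg_OU m).eq
  · -- arbitrary existing meets
    intro S m hm
    refine Subtype.ext ?_
    have him : (Regular.val '' ((fun a => (⟨OU a, isReg_OU a⟩ : Regular (Opens (Spec L)))) '' S))
        = OU '' S := by
      exact Set.image_image _ _ _
    show OU m = sInf (Regular.val ''
      ((fun a => (⟨OU a, isReg_OU a⟩ : Regular (Opens (Spec L)))) '' S))
    rw [him]
    refine le_antisymm ?_ ?_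
    · refine le_sInf ?_
      rintro _ ⟨s, hs, rfl⟩
      exact opens_le_iff.2 (Umono (hm.1 hs))
    · refine opens_le_iff.2 ?_
      refine open_MID hMID hm (sInf (OU '' S)).2 ?_
      intro s hs
      have h2 : sInf (OU '' S) ≤ OU s := sInf_le (Set.mem_image_of_mem OU hs)
      exact opens_le_iff.1 h2

end Main

end FunayamaAux



/-- Funayama's theorem: a lattice `L` admits a complete
embedding (an injective lattice homomorphism preserving all existing joins and
meets) into a complete Boolean algebra iff `L` satisfies the join-infinite
distributive law (JID) and the meet-infinite distributive law (MID). -/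
theorem funayama (L : Type u) [Lattice L] :
    (∃ (B : Type u) (inst : CompleteBooleanAlgebra B) (e : L → B),
      Function.Injective e ∧
      (∀ a b : L, e (a ⊓ b) = inst.inf (e a) (e b)) ∧
      (∀ a b : L, e (a ⊔ b) = inst.sup (e a) (e b)) ∧
      (∀ (S : Set L) (m : L), IsLUB S m → e m = inst.sSup (e '' S)) ∧
      (∀ (S : Set L) (m : L), IsGLB S m → e m = inst.sInf (e '' S)))
    ↔
    ((∀ (S : Set L) (m a : L), IsLUB S m → IsLUB ((fun s => a ⊓ s) '' S) (a ⊓ m)) ∧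
     (∀ (S : Set L) (m a : L), IsGLB S m → IsGLB ((fun s => a ⊔ s) '' S) (a ⊔ m))) := by
  constructor
  · rintro ⟨B, inst, e, hinj, hinf, hsup, hlub, hglb⟩
    letI : CompleteBooleanAlgebra B := inst
    have hinf' : ∀ a b : L, e (a ⊓ b) = e a ⊓ e b := hinf
    have hsup' : ∀ a b : L, e (a ⊔ b) = e a ⊔ e b := hsup
    have hlub' : ∀ (S : Set L) (m : L), IsLUB S m → e m = sSup (e '' S) := hlub
    have hglb' : ∀ (S : Set L) (m : L), IsGLB S m → e m = sInf (e '' S) := hglb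
    have hmono : ∀ {x y : L}, x ≤ y → e x ≤ e y := by
      intro x y h
      calc e x = e (x ⊓ y) := by rw [inf_eq_left.2 h]
        _ = e x ⊓ e y := hinf' x y
        _ ≤ e y := inf_le_right
    have hrefl : ∀ {x y : L}, e x ≤ e y → x ≤ y := by
      intro x y h
      have h1 : e (x ⊓ y) = e x := by rw [hinf']; exact inf_eq_left.2 h
      exact inf_eq_left.1 (hinj h1)
    constructor
    · intro S m a hm
      constructor
      · rintro _ ⟨s, hs, rfl⟩
        exact inf_le_inf_left a (hm.1 hs)
      · intro u hu
        refine hrefl ?_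
        calc e (a ⊓ m) = e a ⊓ e m := hinf' a m
          _ = e a ⊓ sSup (e '' S) := by rw [hlub' S m hm]
          _ = ⨆ b ∈ e '' S, e a ⊓ b := inf_sSup_eq
          _ ≤ e u := by
              refine iSup₂_le ?_
              rintro _ ⟨s, hs, rfl⟩
              rw [← hinf' a s]
              exact hmono (hu ⟨s, hs, rfl⟩)
    · intro S m a hm
      constructor
      · rintro _ ⟨s, hs, rfl⟩
        exact sup_le_sup_left (hm.1 hs) a
      · intro u hu
        refine hrefl ?_
        have h2 : e u ≤ ⨅ b ∈ e '' S, e a ⊔ b := by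
          refine le_iInf₂ ?_
          rintro _ ⟨s, hs, rfl⟩
          rw [← hsup' a s]
          exact hmono (hu ⟨s, hs, rfl⟩)
        calc e u ≤ ⨅ b ∈ e '' S, e a ⊔ b := h2
          _ = e a ⊔ sInf (e '' S) := sup_sInf_eq.symm
          _ = e a ⊔ e m := by rw [hglb' S m hm]
          _ = e (a ⊔ m) := (hsup' a m).symm
  · rintro ⟨hJID, hMID⟩
    letI : DistribLattice L := DistribLattice.ofInfSupLe (fun a b c => by
      have h := hJID {b, c} (b ⊔ c) a isLUB_pair
      refine h.2 ?_
      rintro _ ⟨s, hs, rfl⟩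
      rcases hs with rfl | rfl
      · exact le_sup_left
      · exact le_sup_right)
    exact FunayamaAux.main hJID hMID
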